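/- Let φ be the characteristic function of an integer-valued random variable X and let 0 < β ≤ 2. The following assertions are equivalent: (i) there exists c > 0 such that |1−φ(x)| ≥ c|x|^β for all x in some open neighborhood of 0; (ii) there exist a positive integer d and c' > 0 such that |1−φ(2πx)| ≥ c'‖dx‖^β for all real x; (iii) there exist a positive integer d and c' > 0 such that |1−φ(2πx)| ≥ c'|φ(2πx)|·‖dx‖^β for all real x. -/

import Mathlib

open MeasureTheory ProbabilityTheory Filter Finset Real
open scoped ENNReal

noncomputable section

/-- Distance from a real number `x` to the nearest integer: the norm of its image
on the torus `𝕋 = ℝ/ℤ`. -/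
def torusNorm (x : ℝ) : ℝ := ‖(x : UnitAddCircle)‖

/-- The set of couplings of two Borel measures on the torus. -/
def couplings (ν₀ ν₁ : Measure UnitAddCircle) : Set (Measure (UnitAddCircle × UnitAddCircle)) :=
  {γ | γ.map Prod.fst = ν₀ ∧ γ.map Prod.snd = ν₁}

/-- The `L^p`-Wasserstein distance between two Borel measures on the torus. -/
def wassersteinDist (p : ℝ) (ν₀ ν₁ : Measure UnitAddCircle) : ℝ :=
  sInf ((fun γ => (∫ z, dist z.1 z.2 ^ p ∂γ) ^ (1 / p)) '' couplings ν₀ ν₁)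

/-- The empirical measure `μ_n = (1/n) ∑_{j=1}^n δ_{{S_j α}}` on the torus,
for a given path `S : ℕ → ℤ` of the random walk. -/
def empiricalMeasure (α : ℝ) (S : ℕ → ℤ) (n : ℕ) : Measure UnitAddCircle :=
  (n : ℝ≥0∞)⁻¹ • ∑ j ∈ Finset.range n, Measure.dirac (((S (j + 1) : ℝ) * α : ℝ) : UnitAddCircle)

/-- The expected `L^p`-Wasserstein distance `E[W_p(μ_n, μ)]` between the empirical measure
of the random walk `S_j = X_1 + ⋯ + X_j` (mod 1, rotated by `α`) and the uniform
distribution `μ` on the torus. -/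
def expWassersteinEmp {Ω : Type*} [MeasurableSpace Ω] (P : Measure Ω) (X : ℕ → Ω → ℤ)
    (α : ℝ) (p : ℝ) (n : ℕ) : ℝ :=
  ∫ ω, wassersteinDist p (empiricalMeasure α (fun j => ∑ i ∈ Finset.range j, X i ω) n) volume ∂P

/-! ### Auxiliary lemmas -/

section TorusAux

lemma tn_eq_abs {x : ℝ} (hx : |x| ≤ 1/2) : torusNorm x = |x| :=
  (AddCircle.norm_coe_eq_abs_iff (p := (1:ℝ)) one_ne_zero).mpr (by simpa using hx)

lemma tn_le_half (x : ℝ) : torusNorm x ≤ 1/2 := by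
  rw [torusNorm, UnitAddCircle.norm_eq]; exact abs_sub_round x

lemma tn_nonneg (x : ℝ) : 0 ≤ torusNorm x := norm_nonneg _

lemma tn_int_add (x : ℝ) (k : ℤ) : torusNorm (x + k) = torusNorm x := by
  rw [torusNorm, torusNorm, UnitAddCircle.norm_eq, UnitAddCircle.norm_eq, round_add_intCast]
  push_cast
  ring_nf

end TorusAux

section CFAux

set_option linter.unusedSectionVars false

variable {Ω : Type*} [MeasurableSpace Ω] {P : Measure Ω} [IsProbabilityMeasure P]
  {X : Ω → ℤ} (hmeas : Measurable X)

lemma cf_eq (x : ℝ) (ω : Ω) :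
    Complex.exp (Complex.I * x * (X ω : ℂ)) = Complex.exp (((x * (X ω : ℤ) : ℝ) : ℂ) * Complex.I) := by
  push_cast; ring_nf

lemma cf_norm (x : ℝ) (ω : Ω) : ‖Complex.exp (Complex.I * x * (X ω : ℂ))‖ = 1 := by
  rw [cf_eq, Complex.norm_exp_ofReal_mul_I]

include hmeas in
lemma cf_meas (x : ℝ) :
    AEStronglyMeasurable (fun ω => Complex.exp (Complex.I * x * (X ω : ℂ))) P := by
  have : Measurable fun ω => Complex.exp (Complex.I * x * (X ω : ℂ)) :=
    (measurable_from_top (f := fun n : ℤ => Complex.exp (Complex.I * x * (n : ℂ)))).comp hmeas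
  exact this.aestronglyMeasurable

include hmeas in
lemma cf_int (x : ℝ) :
    Integrable (fun ω => Complex.exp (Complex.I * x * (X ω : ℂ))) P :=
  (integrable_const (1:ℝ)).mono' (cf_meas hmeas x) (Filter.Eventually.of_forall fun ω => by
    rw [cf_norm])

include hmeas in
lemma cf_norm_le (x : ℝ) : ‖∫ ω, Complex.exp (Complex.I * x * (X ω : ℂ)) ∂P‖ ≤ 1 := by
  calc ‖∫ ω, Complex.exp (Complex.I * x * (X ω : ℂ)) ∂P‖
      ≤ ∫ ω, ‖Complex.exp (Complex.I * x * (X ω : ℂ))‖ ∂P := norm_integral_le_integral_norm _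
    _ = 1 := by simp only [cf_norm]; simp

include hmeas in
lemma cf_cont : Continuous fun x : ℝ => ∫ ω, Complex.exp (Complex.I * x * (X ω : ℂ)) ∂P := by
  apply continuous_of_dominated (bound := fun _ => (1:ℝ)) (fun x => cf_meas hmeas x)
    (fun x => Filter.Eventually.of_forall fun ω => by rw [cf_norm]) (integrable_const 1)
  exact Filter.Eventually.of_forall fun ω => by fun_prop

lemma cf_zero : (∫ ω, Complex.exp (Complex.I * (0:ℝ) * (X ω : ℂ)) ∂P) = 1 := by
  simp

lemma cf_two_pi : (∫ ω, Complex.exp (Complex.I * (2*π*1 : ℝ) * (X ω : ℂ)) ∂P) = 1 := by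
  have : ∀ ω, Complex.exp (Complex.I * ((2*π*1 : ℝ) : ℂ) * (X ω : ℂ)) = 1 := fun ω => by
    rw [show Complex.I * ((2*π*1 : ℝ) : ℂ) * (X ω : ℂ) = (X ω : ℂ) * (2 * π * Complex.I) by
      push_cast; ring]
    exact Complex.exp_int_mul_two_pi_mul_I _
  rw [show (fun ω => Complex.exp (Complex.I * ((2*π*1:ℝ):ℂ) * (X ω : ℂ))) = fun _ => (1:ℂ) from
    funext this, integral_const]
  simp

include hmeas in
lemma cf_shift (y : ℝ) (hy : (∫ ω, Complex.exp (Complex.I * y * (X ω : ℂ)) ∂P) = 1) (t : ℝ) :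
    (∫ ω, Complex.exp (Complex.I * ((y + t) : ℝ) * (X ω : ℂ)) ∂P)
      = ∫ ω, Complex.exp (Complex.I * t * (X ω : ℂ)) ∂P := by
  have hint : Integrable (fun ω => 1 - Real.cos (y * (X ω : ℤ))) P := by
    have hm : Measurable fun ω => 1 - Real.cos (y * (X ω : ℤ)) :=
      (measurable_from_top (f := fun n : ℤ => 1 - Real.cos (y * n))).comp hmeas
    exact (integrable_const (2:ℝ)).mono' hm.aestronglyMeasurable
      (Filter.Eventually.of_forall fun ω => by
        rw [Real.norm_eq_abs, abs_sub_le_iff]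
        constructor <;> nlinarith [Real.neg_one_le_cos (y * (X ω : ℤ)),
          Real.cos_le_one (y * (X ω : ℤ))])
  have hcosint : Integrable (fun ω => Real.cos (y * (X ω : ℤ))) P := by
    have hm : Measurable fun ω => Real.cos (y * (X ω : ℤ)) :=
      (measurable_from_top (f := fun n : ℤ => Real.cos (y * n))).comp hmeas
    exact (integrable_const (1:ℝ)).mono' hm.aestronglyMeasurable
      (Filter.Eventually.of_forall fun ω => by
        rw [Real.norm_eq_abs]; exact Real.abs_cos_le_one _)
  have hre : (∫ ω, (1 - Real.cos (y * (X ω : ℤ))) ∂P) = 0 := by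
    have h1 : (∫ ω, Real.cos (y * (X ω : ℤ)) ∂P)
        = (∫ ω, Complex.exp (Complex.I * y * (X ω : ℂ)) ∂P).re := by
      have h2 := integral_re (μ := P) (cf_int hmeas y)
      simp only [RCLike.re_to_complex] at h2
      rw [← h2]
      exact integral_congr_ae (Filter.Eventually.of_forall fun ω => by
        show Real.cos _ = (Complex.exp (Complex.I * y * (X ω : ℂ))).re
        rw [cf_eq, Complex.exp_ofReal_mul_I_re])
    rw [integral_sub (integrable_const 1) hcosint, h1, hy]
    simp
  have hae : ∀ᵐ ω ∂P, Complex.exp (Complex.I * y * (X ω : ℂ)) = 1 := by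
    have h0 : (fun ω => 1 - Real.cos (y * (X ω : ℤ))) =ᵐ[P] 0 :=
      (integral_eq_zero_iff_of_nonneg (fun ω => sub_nonneg.mpr (Real.cos_le_one _)) hint).mp hre
    refine h0.mono fun ω h => ?_
    simp only [Pi.zero_apply] at h
    have hcos : Real.cos (y * (X ω : ℤ)) = 1 := by linarith
    have hsin : Real.sin (y * (X ω : ℤ)) = 0 := by
      have := Real.sin_sq_add_cos_sq (y * (X ω : ℤ))
      nlinarith
    rw [cf_eq, Complex.exp_mul_I, ← Complex.ofReal_cos, ← Complex.ofReal_sin, hcos, hsin]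
    simp
  calc (∫ ω, Complex.exp (Complex.I * ((y + t) : ℝ) * (X ω : ℂ)) ∂P)
      = ∫ ω, Complex.exp (Complex.I * y * (X ω : ℂ)) * Complex.exp (Complex.I * t * (X ω : ℂ)) ∂P := by
        congr 1; ext ω
        rw [← Complex.exp_add]; congr 1; push_cast; ring
    _ = ∫ ω, Complex.exp (Complex.I * t * (X ω : ℂ)) ∂P := by
        refine integral_congr_ae (hae.mono fun ω h => ?_)
        simp only [h, one_mul]

end CFAux

/-- Proposition 2.1 of the paper: equivalent characterizations of the
lower H\"older-type bound `|1 - φ(x)| ≥ c|x|^β` near `0`, for the characteristic function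
`φ` of an integer-valued random variable. -/
theorem charFun_lower_bound_equivalences
    {Ω : Type*} [MeasurableSpace Ω] (P : Measure Ω) [IsProbabilityMeasure P]
    (X : Ω → ℤ) (hmeas : Measurable X)
    (φ : ℝ → ℂ)
    (hφ : ∀ x : ℝ, φ x = ∫ ω, Complex.exp (Complex.I * x * (X ω : ℂ)) ∂P)
    (β : ℝ) (hβ0 : 0 < β) (hβ2 : β ≤ 2) :
    ((∃ c : ℝ, 0 < c ∧ ∃ U ∈ nhds (0 : ℝ), ∀ x ∈ U, c * |x| ^ β ≤ ‖1 - φ x‖) ↔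
      (∃ d : ℕ, 0 < d ∧ ∃ c' : ℝ, 0 < c' ∧
        ∀ x : ℝ, c' * torusNorm ((d : ℝ) * x) ^ β ≤ ‖1 - φ (2 * π * x)‖)) ∧
    ((∃ d : ℕ, 0 < d ∧ ∃ c' : ℝ, 0 < c' ∧
        ∀ x : ℝ, c' * torusNorm ((d : ℝ) * x) ^ β ≤ ‖1 - φ (2 * π * x)‖) ↔
      (∃ d : ℕ, 0 < d ∧ ∃ c' : ℝ, 0 < c' ∧
        ∀ x : ℝ, c' * ‖φ (2 * π * x)‖ * torusNorm ((d : ℝ) * x) ^ β ≤ ‖1 - φ (2 * π * x)‖)) := by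
  -- basic facts about φ
  have hnorm1 : ∀ x : ℝ, ‖φ x‖ ≤ 1 := fun x => by rw [hφ]; exact cf_norm_le hmeas x
  have hcont : Continuous φ := (cf_cont hmeas).congr fun x => (hφ x).symm
  have hφ0 : φ 0 = 1 := by rw [hφ]; exact cf_zero
  have hshift : ∀ y : ℝ, φ y = 1 → ∀ t : ℝ, φ (y + t) = φ t := by
    intro y hy t
    rw [hφ, hφ]
    exact cf_shift hmeas y (by rw [← hφ]; exact hy) t
  have hG1 : φ (2*π*(1:ℝ)) = 1 := by rw [hφ]; exact cf_two_pi
  constructor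
  · -- (i) ↔ (ii)
    constructor
    · -- (i) → (ii), the hard direction
      rintro ⟨c, hc, U, hU, hbound⟩
      obtain ⟨δ, hδ, hball⟩ := Metric.mem_nhds_iff.mp hU
      set Gs : Set ℝ := {a : ℝ | φ (2*π*a) = 1} with hGsdef
      have hG0 : (0:ℝ) ∈ Gs := by show φ (2*π*0) = 1; rw [mul_zero, hφ0]
      have hGone : (1:ℝ) ∈ Gs := hG1
      have hGadd : ∀ a ∈ Gs, ∀ b ∈ Gs, a + b ∈ Gs := by
        intro a ha b hb
        show φ (2*π*(a+b)) = 1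
        rw [show 2*π*(a+b) = 2*π*a + 2*π*b by ring, hshift _ ha]
        exact hb
      have hGneg : ∀ a ∈ Gs, -a ∈ Gs := by
        intro a ha
        have h := hshift (2*π*a) ha (2*π*(-a))
        rw [show 2*π*a + 2*π*(-a) = 0 by ring, hφ0] at h
        exact h.symm
      have hGzsmul : ∀ a ∈ Gs, ∀ k : ℤ, ((k:ℝ) * a) ∈ Gs := by
        intro a ha k
        induction k using Int.induction_on with
        | zero => simpa using hG0
        | succ n ih =>
            rw [show ((((n:ℤ)+1 : ℤ)):ℝ)*a = (((n:ℤ)):ℝ)*a + a by push_cast; ring]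
            exact hGadd _ ih _ ha
        | pred n ih =>
            rw [show (((-(n:ℤ) - 1 : ℤ)):ℝ)*a = ((-(n:ℤ) : ℤ):ℝ)*a + -a by push_cast; ring]
            exact hGadd _ ih _ (hGneg _ ha)
      have hGclosed : IsClosed Gs :=
        IsClosed.preimage (hcont.comp (continuous_const.mul continuous_id)) isClosed_singleton
      set r0 : ℝ := δ / (2*π) with hr0def
      have hr0 : 0 < r0 := div_pos hδ Real.two_pi_pos
      have hiso : ∀ a : ℝ, a ∈ Gs → a ≠ 0 → r0 ≤ |a| := by
        intro a ha hne
        by_contra hlt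
        push_neg at hlt
        have hmem : (2*π*a) ∈ Metric.ball (0:ℝ) δ := by
          rw [Metric.mem_ball, Real.dist_eq, sub_zero, abs_mul,
            abs_of_pos Real.two_pi_pos]
          calc 2*π*|a| < 2*π*r0 := by
                have := Real.two_pi_pos; exact mul_lt_mul_of_pos_left hlt this
            _ = δ := by rw [hr0def]; field_simp
        have hb := hbound _ (hball hmem)
        rw [ha] at hb
        simp only [sub_self, norm_zero] at hb
        have hpos : 0 < c * |2*π*a| ^ β := by
          apply mul_pos hc
          apply Real.rpow_pos_of_pos
          rw [abs_pos]
          exact mul_ne_zero (ne_of_gt Real.two_pi_pos) hne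
        linarith
      -- minimal positive element of `Gs`
      have hr0le1 : r0 ≤ 1 := by simpa using hiso 1 hGone one_ne_zero
      have hSne : (Gs ∩ Set.Ici r0).Nonempty := ⟨1, hGone, hr0le1⟩
      have hSbdd : BddBelow (Gs ∩ Set.Ici r0) := ⟨r0, fun g hg => hg.2⟩
      have haS : sInf (Gs ∩ Set.Ici r0) ∈ Gs ∩ Set.Ici r0 :=
        (hGclosed.inter isClosed_Ici).csInf_mem hSne hSbdd
      set a : ℝ := sInf (Gs ∩ Set.Ici r0) with hadef
      have haG : a ∈ Gs := haS.1
      have hapos : 0 < a := lt_of_lt_of_le hr0 haS.2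
      have hale1 : a ≤ 1 := csInf_le hSbdd ⟨hGone, hr0le1⟩
      have hamin : ∀ g ∈ Gs, 0 < g → a ≤ g := by
        intro g hg hgpos
        refine csInf_le hSbdd ⟨hg, ?_⟩
        have h := hiso g hg (ne_of_gt hgpos)
        rwa [abs_of_pos hgpos] at h
      -- `a = 1/m` for a positive integer `m`
      set m : ℤ := ⌊a⁻¹⌋ with hmdef
      have hminv : (m:ℝ) ≤ a⁻¹ := Int.floor_le _
      have hm1 : 1 ≤ m := by
        rw [hmdef, Int.le_floor]
        push_cast
        rw [le_inv_comm₀ one_pos hapos]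
        simpa using hale1
      have hma : (m:ℝ) * a ≤ 1 := by
        calc (m:ℝ) * a ≤ a⁻¹ * a := mul_le_mul_of_nonneg_right hminv hapos.le
          _ = 1 := inv_mul_cancel₀ (ne_of_gt hapos)
      have hma2 : 1 < ((m:ℝ) + 1) * a := by
        have h2 : a⁻¹ < (m:ℝ) + 1 := Int.lt_floor_add_one _
        calc (1:ℝ) = a⁻¹ * a := (inv_mul_cancel₀ (ne_of_gt hapos)).symm
          _ < ((m:ℝ) + 1) * a := by exact mul_lt_mul_of_pos_right h2 hapos
      have hgG : (1 - (m:ℝ)*a) ∈ Gs := by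
        have h1 := hGzsmul _ haG (-m)
        have h2 := hGadd _ hGone _ h1
        rwa [show (1:ℝ) + ((-m : ℤ):ℝ)*a = 1 - (m:ℝ)*a by push_cast; ring] at h2
      have hkey : (m:ℝ) * a = 1 := by
        by_contra hne
        have hpos : 0 < 1 - (m:ℝ)*a := by
          rcases lt_or_eq_of_le hma with h | h
          · linarith
          · exact absurd h hne
        have := hamin _ hgG hpos
        linarith
      set d : ℕ := m.toNat with hddef
      have hdpos : 0 < d := by
        rw [hddef]
        omega
      have hdm : ((d:ℕ):ℝ) = (m:ℝ) := by
        rw [hddef]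
        exact_mod_cast congrArg (Int.cast : ℤ → ℝ) (Int.toNat_of_nonneg (by omega))
      have hdr : (0:ℝ) < (d:ℝ) := by exact_mod_cast hdpos
      have had : a = 1/(d:ℝ) := by
        rw [hdm]
        field_simp
        linarith [hkey]
      -- positive lower bound for `‖1 - φ(2πt)‖` away from the zeros
      have hfcont : Continuous fun t : ℝ => ‖1 - φ (2*π*t)‖ :=
        (continuous_const.sub (hcont.comp (continuous_const.mul continuous_id))).norm
      set K : Set ℝ := {t : ℝ | r0 ≤ |t| ∧ |t| ≤ 1/(2*(d:ℝ))} with hKdef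
      have hKclosed : IsClosed K := by
        have hEq : K = abs ⁻¹' (Set.Icc r0 (1/(2*(d:ℝ)))) := rfl
        rw [hEq]
        exact isClosed_Icc.preimage continuous_abs
      have hKcompact : IsCompact K :=
        isCompact_Icc.of_isClosed_subset hKclosed
          (fun t ht => Set.mem_Icc.mpr (abs_le.mp ht.2))
      obtain ⟨m0, hm0pos, hm0⟩ :
          ∃ m0 : ℝ, 0 < m0 ∧ ∀ t ∈ K, m0 ≤ ‖1 - φ (2*π*t)‖ := by
        by_cases hK : K.Nonempty
        · obtain ⟨t0, ht0K, ht0min⟩ := hKcompact.exists_isMinOn hK hfcont.continuousOn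
          refine ⟨‖1 - φ (2*π*t0)‖, ?_, fun t ht => ht0min ht⟩
          rcases (norm_nonneg (1 - φ (2*π*t0))).lt_or_eq with h | h
          · exact h
          · exfalso
            have hzero : φ (2*π*t0) = 1 := by
              have h2 := h.symm
              rw [norm_eq_zero, sub_eq_zero] at h2
              exact h2.symm
            have ht0G : t0 ∈ Gs := hzero
            have habsG : |t0| ∈ Gs := by
              rcases abs_cases t0 with ⟨h1, _⟩ | ⟨h1, _⟩
              · rw [h1]; exact ht0G
              · rw [h1]; exact hGneg _ ht0G
            have hpos0 : 0 < |t0| := lt_of_lt_of_le hr0 ht0K.1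
            have hle := hamin _ habsG hpos0
            have h12 : |t0| ≤ 1/(2*(d:ℝ)) := ht0K.2
            rw [had] at hle
            have : 1/(d:ℝ) ≤ 1/(2*(d:ℝ)) := le_trans hle h12
            rw [div_le_div_iff₀ hdr (by positivity)] at this
            nlinarith
        · exact ⟨1, one_pos, fun t ht => absurd ⟨t, ht⟩ hK⟩
      -- conclusion
      refine ⟨d, hdpos, min (c * (2*π/(d:ℝ))^β) m0, lt_min (by positivity) hm0pos, ?_⟩
      intro x
      set k : ℤ := round ((d:ℝ)*x) with hkdef
      set t : ℝ := x - k/(d:ℝ) with htdef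
      have hdt : (d:ℝ)*t = (d:ℝ)*x - k := by rw [htdef]; field_simp
      have hdtabs : |(d:ℝ)*t| ≤ 1/2 := by rw [hdt, hkdef]; exact abs_sub_round _
      have htn : torusNorm ((d:ℝ)*x) = |(d:ℝ)*t| := by
        rw [show (d:ℝ)*x = (d:ℝ)*t + k by rw [hdt]; ring, tn_int_add, tn_eq_abs hdtabs]
      have hkG : ((k:ℝ)/(d:ℝ)) ∈ Gs := by
        have h1 := hGzsmul _ haG k
        rwa [had, mul_one_div] at h1
      have hphix : φ (2*π*x) = φ (2*π*t) := by
        have h1 := hshift (2*π*((k:ℝ)/(d:ℝ))) hkG (2*π*t)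
        rwa [show 2*π*((k:ℝ)/(d:ℝ)) + 2*π*t = 2*π*x by rw [htdef]; field_simp; ring] at h1
      rw [htn, hphix]
      by_cases hcase : |t| < r0
      · have hmem : (2*π*t) ∈ Metric.ball (0:ℝ) δ := by
          rw [Metric.mem_ball, Real.dist_eq, sub_zero, abs_mul, abs_of_pos Real.two_pi_pos]
          calc 2*π*|t| < 2*π*r0 := mul_lt_mul_of_pos_left hcase Real.two_pi_pos
            _ = δ := by rw [hr0def]; field_simp
        have hb := hbound _ (hball hmem)
        calc min (c * (2*π/(d:ℝ))^β) m0 * |(d:ℝ)*t|^β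
            ≤ (c * (2*π/(d:ℝ))^β) * |(d:ℝ)*t|^β :=
              mul_le_mul_of_nonneg_right (min_le_left _ _) (Real.rpow_nonneg (abs_nonneg _) β)
          _ = c * ((2*π/(d:ℝ)) * |(d:ℝ)*t|)^β := by
              rw [Real.mul_rpow (by positivity) (abs_nonneg _), mul_assoc]
          _ = c * |2*π*t|^β := by
              congr 2
              rw [show |2*π*t| = (2*π)*|t| by rw [abs_mul, abs_of_pos Real.two_pi_pos],
                show |(d:ℝ)*t| = (d:ℝ)*|t| by rw [abs_mul, abs_of_pos hdr]]
              field_simp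
          _ ≤ ‖1 - φ (2*π*t)‖ := hb
      · push_neg at hcase
        have htabs : |t| ≤ 1/(2*(d:ℝ)) := by
          have h1 : |t| = |(d:ℝ)*t|/(d:ℝ) := by
            rw [abs_mul, abs_of_pos hdr]
            field_simp
          rw [h1, div_le_iff₀ hdr]
          calc |(d:ℝ)*t| ≤ 1/2 := hdtabs
            _ = 1/(2*(d:ℝ))*(d:ℝ) := by field_simp
        have htK : t ∈ K := ⟨hcase, htabs⟩
        calc min (c * (2*π/(d:ℝ))^β) m0 * |(d:ℝ)*t|^β
            ≤ m0 * 1 :=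
              mul_le_mul (min_le_right _ _)
                (Real.rpow_le_one (abs_nonneg _) (le_trans hdtabs (by norm_num)) hβ0.le)
                (Real.rpow_nonneg (abs_nonneg _) β) hm0pos.le
          _ = m0 := mul_one _
          _ ≤ ‖1 - φ (2*π*t)‖ := hm0 t htK
    · -- (ii) → (i)
      rintro ⟨d, hd, c', hc', H⟩
      have hdpos : (0:ℝ) < d := by exact_mod_cast hd
      refine ⟨c' * ((d:ℝ)/(2*π))^β, by positivity, Metric.ball 0 (π/(d:ℝ)),
        Metric.ball_mem_nhds 0 (by positivity), ?_⟩
      intro x hx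
      have hx' : |x| < π/(d:ℝ) := by
        rw [Metric.mem_ball, Real.dist_eq, sub_zero] at hx; exact hx
      have h2 := H (x/(2*π))
      have habs : |(d:ℝ)*(x/(2*π))| = (d:ℝ)*|x|/(2*π) := by
        rw [abs_mul, abs_div, abs_of_pos hdpos, abs_of_pos Real.two_pi_pos]
        ring
      have hhalf : |(d:ℝ)*(x/(2*π))| ≤ 1/2 := by
        rw [habs, div_le_div_iff₀ Real.two_pi_pos two_pos]
        have h3 : (d:ℝ)*|x| < π := by
          calc (d:ℝ)*|x| < (d:ℝ)*(π/(d:ℝ)) := mul_lt_mul_of_pos_left hx' hdpos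
            _ = π := by field_simp
        nlinarith
      rw [tn_eq_abs hhalf, show 2*π*(x/(2*π)) = x by field_simp] at h2
      calc c' * ((d:ℝ)/(2*π))^β * |x|^β
          = c' * (((d:ℝ)/(2*π))*|x|)^β := by
            rw [Real.mul_rpow (by positivity) (abs_nonneg x), mul_assoc]
        _ = c' * |(d:ℝ)*(x/(2*π))|^β := by rw [habs]; ring_nf
        _ ≤ ‖1 - φ x‖ := h2
  · -- (ii) ↔ (iii)
    constructor
    · rintro ⟨d, hd, c', hc', H⟩
      refine ⟨d, hd, c', hc', fun x => ?_⟩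
      calc c' * ‖φ (2*π*x)‖ * torusNorm ((d:ℝ)*x) ^ β
          ≤ c' * torusNorm ((d:ℝ)*x) ^ β := by
            apply mul_le_mul_of_nonneg_right _ (Real.rpow_nonneg (tn_nonneg _) β)
            exact mul_le_of_le_one_right hc'.le (hnorm1 _)
        _ ≤ ‖1 - φ (2*π*x)‖ := H x
    · rintro ⟨d, hd, c', hc', H⟩
      refine ⟨d, hd, min (c'/2) (1/4), by positivity, fun x => ?_⟩
      have htn1 : torusNorm ((d:ℝ)*x) ^ β ≤ 1 :=
        Real.rpow_le_one (tn_nonneg _) (le_trans (tn_le_half _) (by norm_num)) hβ0.le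
      by_cases hφx : 1/2 ≤ ‖φ (2*π*x)‖
      · calc min (c'/2) (1/4) * torusNorm ((d:ℝ)*x) ^ β
            ≤ (c'/2) * torusNorm ((d:ℝ)*x) ^ β :=
              mul_le_mul_of_nonneg_right (min_le_left _ _) (Real.rpow_nonneg (tn_nonneg _) β)
          _ ≤ c' * ‖φ (2*π*x)‖ * torusNorm ((d:ℝ)*x) ^ β := by
              apply mul_le_mul_of_nonneg_right _ (Real.rpow_nonneg (tn_nonneg _) β)
              nlinarith
          _ ≤ ‖1 - φ (2*π*x)‖ := H x
      · push_neg at hφx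
        have hlow : 1/2 ≤ ‖1 - φ (2*π*x)‖ := by
          have := norm_sub_norm_le (1 : ℂ) (φ (2*π*x))
          rw [norm_one] at this
          linarith
        calc min (c'/2) (1/4) * torusNorm ((d:ℝ)*x) ^ β
            ≤ (1/4) * 1 :=
              mul_le_mul (min_le_right _ _) htn1 (Real.rpow_nonneg (tn_nonneg _) β) (by norm_num)
          _ ≤ ‖1 - φ (2*π*x)‖ := by linarith
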